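/- Suppose g : [a,b] → ℝ is convex and g(x) ≤ 0 for all x ∈ [a,b]. Then for every x ∈ [a,b], ∫_a^b g(t) dt ≤ ((b−a)/2) g(x). In particular, any nonpositive convex function on [a,b] is bounded below by (2/(b−a)) ∫_a^b g(t) dt. -/

import Mathlib

open MeasureTheory intervalIntegral

lemma aux_lin_int (c d : ℝ) : (∫ t in c..d, (d - t)) = (d - c)^2 / 2 := by
  rw [intervalIntegral.integral_sub intervalIntegrable_const intervalIntegral.intervalIntegrable_id]
  simp [integral_id]
  ring

lemma aux_lin_int' (c d : ℝ) : (∫ t in c..d, (t - c)) = (d - c)^2 / 2 := by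
  rw [intervalIntegral.integral_sub intervalIntegral.intervalIntegrable_id intervalIntegrable_const]
  simp [integral_id]
  ring

lemma half_right (c d : ℝ) (hcd : c ≤ d) (g : ℝ → ℝ)
    (hconv : ConvexOn ℝ (Set.Icc c d) g) (hneg : ∀ x ∈ Set.Icc c d, g x ≤ 0)
    (hint : IntervalIntegrable g MeasureTheory.volume c d) :
    (∫ t in c..d, g t) ≤ (d - c) / 2 * g c := by
  rcases eq_or_lt_of_le hcd with rfl | h
  · simp
  have hdc : (0:ℝ) < d - c := by linarith
  have hbd : ∀ t ∈ Set.Icc c d, g t ≤ (d - t) / (d - c) * g c := by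
    intro t ht
    obtain ⟨ht1, ht2⟩ := ht
    have hl : (0:ℝ) ≤ (d - t) / (d - c) := div_nonneg (by linarith) hdc.le
    have hm : (0:ℝ) ≤ (t - c) / (d - c) := div_nonneg (by linarith) hdc.le
    have hs : (d - t) / (d - c) + (t - c) / (d - c) = 1 := by field_simp; ring
    have key := hconv.2 (Set.left_mem_Icc.2 hcd) (Set.right_mem_Icc.2 hcd) hl hm hs
    simp only [smul_eq_mul] at key
    rw [show (d - t) / (d - c) * c + (t - c) / (d - c) * d = t by field_simp; ring] at key
    have hgd : g d ≤ 0 := hneg d (Set.right_mem_Icc.2 hcd)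
    have : (t - c) / (d - c) * g d ≤ 0 := mul_nonpos_of_nonneg_of_nonpos hm hgd
    linarith
  have hintb : IntervalIntegrable (fun t => (d - t) / (d - c) * g c) MeasureTheory.volume c d :=
    ((by continuity : Continuous _).intervalIntegrable c d)
  calc (∫ t in c..d, g t) ≤ ∫ t in c..d, (d - t) / (d - c) * g c :=
        intervalIntegral.integral_mono_on hcd hint hintb hbd
    _ = (g c / (d - c)) * ∫ t in c..d, (d - t) := by
        rw [← intervalIntegral.integral_const_mul]
        congr 1; ext t; ring
    _ = (d - c) / 2 * g c := by
        rw [aux_lin_int]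
        field_simp

lemma half_left (c d : ℝ) (hcd : c ≤ d) (g : ℝ → ℝ)
    (hconv : ConvexOn ℝ (Set.Icc c d) g) (hneg : ∀ x ∈ Set.Icc c d, g x ≤ 0)
    (hint : IntervalIntegrable g MeasureTheory.volume c d) :
    (∫ t in c..d, g t) ≤ (d - c) / 2 * g d := by
  rcases eq_or_lt_of_le hcd with rfl | h
  · simp
  have hdc : (0:ℝ) < d - c := by linarith
  have hbd : ∀ t ∈ Set.Icc c d, g t ≤ (t - c) / (d - c) * g d := by
    intro t ht
    obtain ⟨ht1, ht2⟩ := ht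
    have hl : (0:ℝ) ≤ (d - t) / (d - c) := div_nonneg (by linarith) hdc.le
    have hm : (0:ℝ) ≤ (t - c) / (d - c) := div_nonneg (by linarith) hdc.le
    have hs : (d - t) / (d - c) + (t - c) / (d - c) = 1 := by field_simp; ring
    have key := hconv.2 (Set.left_mem_Icc.2 hcd) (Set.right_mem_Icc.2 hcd) hl hm hs
    simp only [smul_eq_mul] at key
    rw [show (d - t) / (d - c) * c + (t - c) / (d - c) * d = t by field_simp; ring] at key
    have hgc : g c ≤ 0 := hneg c (Set.left_mem_Icc.2 hcd)
    have : (d - t) / (d - c) * g c ≤ 0 := mul_nonpos_of_nonneg_of_nonpos hl hgc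
    linarith
  have hintb : IntervalIntegrable (fun t => (t - c) / (d - c) * g d) MeasureTheory.volume c d :=
    ((by continuity : Continuous _).intervalIntegrable c d)
  calc (∫ t in c..d, g t) ≤ ∫ t in c..d, (t - c) / (d - c) * g d :=
        intervalIntegral.integral_mono_on hcd hint hintb hbd
    _ = (g d / (d - c)) * ∫ t in c..d, (t - c) := by
        rw [← intervalIntegral.integral_const_mul]
        congr 1; ext t; ring
    _ = (d - c) / 2 * g d := by
        rw [aux_lin_int']
        field_simp

theorem integral_le_of_convex_nonpos (a b : ℝ) (hab : a < b) (g : ℝ → ℝ)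
    (hconv : ConvexOn ℝ (Set.Icc a b) g) (hneg : ∀ x ∈ Set.Icc a b, g x ≤ 0)
    (hint : IntervalIntegrable g MeasureTheory.volume a b) :
    (∀ x ∈ Set.Icc a b, (∫ t in a..b, g t) ≤ (b - a) / 2 * g x) ∧
    ∀ x ∈ Set.Icc a b, 2 / (b - a) * ∫ t in a..b, g t ≤ g x := by
  have main : ∀ x ∈ Set.Icc a b, (∫ t in a..b, g t) ≤ (b - a) / 2 * g x := by
    intro x hx
    obtain ⟨hx1, hx2⟩ := hx
    have hsub1 : Set.Icc a x ⊆ Set.Icc a b := Set.Icc_subset_Icc le_rfl hx2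
    have hsub2 : Set.Icc x b ⊆ Set.Icc a b := Set.Icc_subset_Icc hx1 le_rfl
    have hint1 : IntervalIntegrable g MeasureTheory.volume a x :=
      hint.mono_set (by rw [Set.uIcc_of_le hx1, Set.uIcc_of_le hab.le]; exact hsub1)
    have hint2 : IntervalIntegrable g MeasureTheory.volume x b :=
      hint.mono_set (by rw [Set.uIcc_of_le hx2, Set.uIcc_of_le hab.le]; exact hsub2)
    have hconv1 : ConvexOn ℝ (Set.Icc a x) g := hconv.subset hsub1 (convex_Icc a x)
    have hconv2 : ConvexOn ℝ (Set.Icc x b) g := hconv.subset hsub2 (convex_Icc x b)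
    have h1 : (∫ t in a..x, g t) ≤ (x - a) / 2 * g x :=
      half_left a x hx1 g hconv1 (fun y hy => hneg y (hsub1 hy)) hint1
    have h2 : (∫ t in x..b, g t) ≤ (b - x) / 2 * g x :=
      half_right x b hx2 g hconv2 (fun y hy => hneg y (hsub2 hy)) hint2
    have hsplit : (∫ t in a..x, g t) + ∫ t in x..b, g t = ∫ t in a..b, g t :=
      intervalIntegral.integral_add_adjacent_intervals hint1 hint2
    nlinarith
  refine ⟨main, fun x hx => ?_⟩
  have h := main x hx
  have hba : (0:ℝ) < b - a := by linarith
  rw [div_mul_eq_mul_div, div_le_iff₀ hba]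
  nlinarith
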